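/- There exists no lightlike hypersurface (M,g), tangent to the structure vector field ζ, of an indefinite Sasakian manifold (M̄, φ̄, ζ, η, ḡ), whose second fundamental form h is recurrent, i.e. such that there exists a 1-form α on M with (∇_X h)(Y,Z) = α(X) h(Y,Z) for all X, Y, Z tangent to M, where (∇_X h)(Y,Z) := ∇^t_X h(Y,Z) − h(∇_X Y, Z) − h(Y, ∇_X Z). -/

import Mathlib

/-- An algebraic model, at the level of (local) smooth functions and vector fields, of a
lightlike hypersurface `(M,g)`, tangent to the structure vector field `ζ`, of an
indefinite Sasakian manifold `(M̄, φ̄, ζ, η, ḡ)`, together with a chosen screen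
distribution `S(TM)` (containing `ζ`, `φ̄ ξ` and `φ̄ N`), a (local) section `ξ` of the
rank-one normal bundle `TM⊥ ⊆ TM`, the associated null transversal section `N`, and all
the induced objects of the Gauss–Weingarten equations.

* `F` models the commutative `ℝ`-algebra of smooth functions on (an open subset of) `M`;
* `E` models the `F`-module of sections of the ambient tangent bundle `TM̄` restricted to `M`;
* `η(X)` is encoded throughout as `ḡ(X,ζ)`, `u(X)` as `g(X,V)`, `v(X)` as `g(X,U)` and
  `θ(X)` as `ḡ(X,N)`. -/
structure SasakiLightlikeHypersurface (F : Type) [CommRing F] [Algebra ℝ F]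
    (E : Type) [AddCommGroup E] [Module F E] where
  /-- the submodule of vector fields tangent to the hypersurface `M` -/
  TM : Submodule F E
  /-- the ambient metric `ḡ` (whose restriction to `TM` is the degenerate induced metric `g`) -/
  gbar : E →ₗ[F] E →ₗ[F] F
  gbar_symm : ∀ X Y : E, gbar X Y = gbar Y X
  /-- the directional derivative `X ⬝ f` of functions along tangent vector fields -/
  D : TM → Derivation ℝ F F
  D_add : ∀ X Y : TM, D (X + Y) = D X + D Y
  D_smul : ∀ (f : F) (X : TM) (k : F), D (f • X) k = f * D X k
  /-- the Lie bracket of vector fields tangent to `M` -/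
  bracket : TM → TM → TM
  D_bracket : ∀ (X Y : TM) (f : F), D (bracket X Y) f = D X (D Y f) - D Y (D X f)
  /-- the ambient Levi-Civita connection `∇̄`, in directions tangent to `M` -/
  nablaBar : TM → E → E
  nablaBar_add : ∀ (X Y : TM) (Z : E), nablaBar (X + Y) Z = nablaBar X Z + nablaBar Y Z
  nablaBar_smul : ∀ (f : F) (X : TM) (Z : E), nablaBar (f • X) Z = f • nablaBar X Z
  nablaBar_add' : ∀ (X : TM) (Y Z : E), nablaBar X (Y + Z) = nablaBar X Y + nablaBar X Z
  nablaBar_leibniz : ∀ (X : TM) (f : F) (Y : E),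
    nablaBar X (f • Y) = D X f • Y + f • nablaBar X Y
  nablaBar_metric : ∀ (X : TM) (Y Z : E),
    D X (gbar Y Z) = gbar (nablaBar X Y) Z + gbar Y (nablaBar X Z)
  nablaBar_torsion_free : ∀ X Y : TM,
    nablaBar X (Y : E) - nablaBar Y (X : E) = (bracket X Y : E)
  /-- a (local) section `ξ` of the rank-one lightlike normal bundle `TM⊥ ⊆ TM` -/
  xi : TM
  xi_normal : ∀ Y : TM, gbar (xi : E) (Y : E) = 0
  xi_spans : ∀ X : TM, (∀ Y : TM, gbar (X : E) (Y : E) = 0) →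
    ∃ f : F, (X : E) = f • (xi : E)
  /-- the screen distribution `S(TM)`, a nondegenerate complement of `TM⊥` in `TM` -/
  S : Submodule F E
  S_le : S ≤ TM
  S_compl : ∀ X : TM, ∃ W ∈ S, ∃ f : F, (X : E) = W + f • (xi : E)
  S_nondeg : ∀ W ∈ S, (∀ Z ∈ S, gbar W Z = 0) → W = 0
  /-- the null transversal section `N`, with `ḡ(ξ,N) = 1`, `ḡ(N,N) = 0`, `ḡ(N, S(TM)) = 0` -/
  Nt : E
  gbar_xi_Nt : gbar (xi : E) Nt = 1
  gbar_Nt_Nt : gbar Nt Nt = 0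
  gbar_Nt_S : ∀ Z ∈ S, gbar Nt Z = 0
  /-- the induced connection `∇` on `M` -/
  nabla : TM → TM → TM
  /-- the local second fundamental form `B` of `M` (the second fundamental form being
  `h(X,Y) = B(X,Y) N`) -/
  B : TM → TM → F
  /-- Gauss equation: `∇̄_X Y = ∇_X Y + B(X,Y) N` -/
  gauss : ∀ X Y : TM, nablaBar X (Y : E) = (nabla X Y : E) + B X Y • Nt
  /-- the shape operator `A_N` of `M` -/
  AN : TM → TM
  /-- the transversal `1`-form `τ`, so that the transversal connection is `∇ᵗ_X N = τ(X) N` -/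
  tau : TM → F
  /-- Weingarten equation: `∇̄_X N = −A_N X + τ(X) N` -/
  weingarten : ∀ X : TM, nablaBar X Nt = -(AN X : E) + tau X • Nt
  /-- the screen shape operator `A*_ξ` -/
  Astar : TM → TM
  /-- `∇_X ξ = −A*_ξ X − τ(X) ξ` -/
  weingarten_screen : ∀ X : TM, nablaBar X (xi : E) = -(Astar X : E) - tau X • (xi : E)
  /-- the projection `P` of `TM` onto `S(TM)`: `X = PX + θ(X) ξ`, `θ(X) = ḡ(X,N)` -/
  P : TM → TM
  P_mem : ∀ X : TM, (P X : E) ∈ S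
  P_spec : ∀ X : TM, (X : E) = (P X : E) + gbar (X : E) Nt • (xi : E)
  /-- the induced connection `∇*` on the screen distribution -/
  nablaStar : TM → TM → TM
  /-- the local second fundamental form `C` of the screen distribution -/
  C : TM → TM → F
  nablaStar_mem : ∀ (X Y : TM), (Y : E) ∈ S → (nablaStar X Y : E) ∈ S
  /-- screen Gauss equation: `∇_X PY = ∇*_X PY + C(X,PY) ξ` -/
  screen_gauss : ∀ (X Y : TM), (Y : E) ∈ S → nabla X Y = nablaStar X Y + C X Y • xi
  /-- the ambient almost contact structure tensor `φ̄` -/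
  phibar : E →ₗ[F] E
  /-- the structure vector field `ζ`, tangent to `M` and lying in the screen distribution -/
  zeta : TM
  zeta_mem : (zeta : E) ∈ S
  gbar_zeta_zeta : gbar (zeta : E) (zeta : E) = 1
  /-- `φ̄² X = −X + η(X) ζ`, where `η(X) = ḡ(X,ζ)` -/
  phibar_sq : ∀ X : E, phibar (phibar X) = -X + gbar X (zeta : E) • (zeta : E)
  /-- `ḡ(φ̄X, φ̄Y) = ḡ(X,Y) − η(X) η(Y)` -/
  phibar_metric : ∀ X Y : E,
    gbar (phibar X) (phibar Y) = gbar X Y - gbar X (zeta : E) * gbar Y (zeta : E)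
  /-- Sasakian condition: `(∇̄_X φ̄) Y = ḡ(X,Y) ζ − η(Y) X` -/
  sasaki : ∀ (X : TM) (Y : E), nablaBar X (phibar Y) - phibar (nablaBar X Y)
    = gbar (X : E) Y • (zeta : E) - gbar Y (zeta : E) • (X : E)
  /-- `∇̄_X ζ = −φ̄ X` -/
  sasaki_zeta : ∀ X : TM, nablaBar X (zeta : E) = -(phibar (X : E))
  /-- `U = −φ̄ N`, tangent to `M` and lying in the screen distribution -/
  U : TM
  U_mem : (U : E) ∈ S
  U_spec : (U : E) = -(phibar Nt)
  /-- `V = −φ̄ ξ`, tangent to `M` and lying in the screen distribution -/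
  V : TM
  V_mem : (V : E) ∈ S
  V_spec : (V : E) = -(phibar (xi : E))
  /-- the induced structure tensor `φ` on `M` -/
  phi : TM → TM
  /-- `φ̄ X = φ X + u(X) N`, where `u(X) = g(X,V)` -/
  phi_spec : ∀ X : TM, phibar (X : E) = (phi X : E) + gbar (X : E) (V : E) • Nt

/-- There exists no lightlike hypersurface `(M,g)`, tangent to the structure vector field
`ζ`, of an indefinite Sasakian manifold `(M̄, φ̄, ζ, η, ḡ)`, whose second fundamental form
`h = B ⊗ N` is recurrent, i.e. such that there is a `1`-form `α` on `M` with
`(∇_X h)(Y,Z) = ∇ᵗ_X h(Y,Z) − h(∇_X Y, Z) − h(Y, ∇_X Z) = α(X) h(Y,Z)` for all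
`X, Y, Z` tangent to `M` (since `∇ᵗ_X N = τ(X) N`, one has
`∇ᵗ_X h(Y,Z) = (X⬝B(Y,Z) + B(Y,Z) τ(X)) • N` and `h(Y,Z) = B(Y,Z) • N`). -/
theorem no_lightlike_hypersurface_with_recurrent_h
    (F : Type) [CommRing F] [Algebra ℝ F] [Nontrivial F]
    (E : Type) [AddCommGroup E] [Module F E]
    (H : SasakiLightlikeHypersurface F E)
    (α : H.TM →ₗ[F] F)
    (hrec : ∀ X Y Z : H.TM,
      (H.D X (H.B Y Z) + H.B Y Z * H.tau X) • H.Nt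
        - H.B (H.nabla X Y) Z • H.Nt - H.B Y (H.nabla X Z) • H.Nt
        = (α X * H.B Y Z) • H.Nt) :
    False := by

  classical
  have gsymm := H.gbar_symm
  have hξT : ∀ Y : H.TM, H.gbar (H.xi : E) (Y : E) = 0 := H.xi_normal
  have hTξ : ∀ Y : H.TM, H.gbar (Y : E) (H.xi : E) = 0 := fun Y => (gsymm _ _).trans (hξT Y)
  -- nablaBar X 0 = 0 and nablaBar X (-v) = -(nablaBar X v)
  have nb0 : ∀ X : H.TM, H.nablaBar X (0 : E) = 0 := by
    intro X
    have h : H.nablaBar X 0 = H.nablaBar X 0 + H.nablaBar X 0 := by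
      simpa using H.nablaBar_add' X 0 0
    exact left_eq_add.mp h
  have nbneg : ∀ (X : H.TM) (v : E), H.nablaBar X (-v) = -H.nablaBar X v := by
    intro X v
    have h := H.nablaBar_add' X v (-v)
    rw [add_neg_cancel, nb0 X] at h
    exact eq_neg_of_add_eq_zero_right h.symm
  -- scalar extraction by pairing with ξ
  have gξ : ∀ a b c d : F, a • H.Nt - b • H.Nt - c • H.Nt = d • H.Nt → a - b - c = d := by
    intro a b c d h
    have h2 := congrArg (fun w => H.gbar (H.xi : E) w) h
    simpa [map_sub, map_smul, smul_eq_mul, H.gbar_xi_Nt] using h2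
  have Brec : ∀ X Y Z : H.TM,
      H.D X (H.B Y Z) + H.B Y Z * H.tau X - H.B (H.nabla X Y) Z - H.B Y (H.nabla X Z)
        = α X * H.B Y Z := fun X Y Z => gξ _ _ _ _ (hrec X Y Z)
  -- B X Y = ḡ(ξ, ∇̄_X Y)
  have BNg : ∀ X Y : H.TM, H.B X Y = H.gbar (H.xi : E) (H.nablaBar X (Y : E)) := by
    intro X Y
    rw [H.gauss X Y]
    simp [map_add, map_smul, smul_eq_mul, hξT (H.nabla X Y), H.gbar_xi_Nt]
  -- B X Y = ḡ(A*X, Y)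
  have BAg : ∀ X Y : H.TM, H.B X Y = H.gbar (H.Astar X : E) (Y : E) := by
    intro X Y
    have hm := H.nablaBar_metric X (H.xi : E) (Y : E)
    rw [hξT Y, H.weingarten_screen X, ← BNg X Y] at hm
    rw [map_zero] at hm
    simp only [map_sub, map_neg, map_smul, LinearMap.sub_apply, LinearMap.neg_apply,
      LinearMap.smul_apply, smul_eq_mul, hξT Y] at hm
    linear_combination -hm
  -- B is symmetric
  have Bsymm : ∀ X Y : H.TM, H.B X Y = H.B Y X := by
    intro X Y
    have ht := H.nablaBar_torsion_free X Y
    have h2 : H.gbar (H.xi : E) (H.nablaBar X (Y : E))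
        - H.gbar (H.xi : E) (H.nablaBar Y (X : E)) = 0 := by
      rw [← map_sub, ht, hξT]
    rw [← BNg X Y, ← BNg Y X] at h2
    exact sub_eq_zero.mp h2
  -- φ̄³ identity
  have tripl : ∀ X : E, H.gbar (H.phibar X) (H.zeta : E) • (H.zeta : E)
      = H.gbar X (H.zeta : E) • H.phibar (H.zeta : E) := by
    intro X
    have h1 := H.phibar_sq (H.phibar X)
    have h2 : H.phibar (H.phibar (H.phibar X))
        = -(H.phibar X) + H.gbar X (H.zeta : E) • H.phibar (H.zeta : E) := by
      rw [show H.phibar (H.phibar X) = -X + H.gbar X (H.zeta : E) • (H.zeta : E) from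
        H.phibar_sq X]
      simp [map_add, map_neg, map_smul]
    rw [h2] at h1
    exact (add_left_cancel h1).symm
  -- φ̄ ζ = 0
  have hφζ : H.phibar (H.zeta : E) = 0 := by
    have h1 : H.phibar (H.zeta : E)
        = H.gbar (H.phibar (H.zeta : E)) (H.zeta : E) • (H.zeta : E) := by
      have h := tripl (H.zeta : E)
      rw [H.gbar_zeta_zeta, one_smul] at h
      exact h.symm
    set c := H.gbar (H.phibar (H.zeta : E)) (H.zeta : E) with hc
    have hm := H.nablaBar_metric H.zeta (H.zeta : E) (H.zeta : E)
    rw [H.gbar_zeta_zeta, Derivation.map_one_eq_zero, H.sasaki_zeta, h1] at hm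
    simp only [map_neg, map_smul, LinearMap.neg_apply, LinearMap.smul_apply, smul_eq_mul,
      H.gbar_zeta_zeta, mul_one] at hm
    have h2 : (2 : ℝ) • c = 0 := by
      rw [two_smul ℝ c]
      linear_combination hm
    have hc0 : c = 0 := by
      calc c = ((2⁻¹ : ℝ) * 2) • c := by norm_num
        _ = (2⁻¹ : ℝ) • ((2 : ℝ) • c) := by rw [mul_smul]
        _ = 0 := by rw [h2, smul_zero]
    rw [h1, hc0, zero_smul]
  -- η ∘ φ̄ = 0
  have ηφ : ∀ X : E, H.gbar (H.phibar X) (H.zeta : E) = 0 := by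
    intro X
    have h := tripl X
    rw [hφζ, smul_zero] at h
    have h2 := congrArg (fun w => H.gbar w (H.zeta : E)) h
    simpa [map_smul, LinearMap.smul_apply, smul_eq_mul, H.gbar_zeta_zeta] using h2
  -- skew-symmetry of φ̄ w.r.t. ḡ
  have skew : ∀ X Y : E, H.gbar (H.phibar X) Y = -H.gbar X (H.phibar Y) := by
    intro X Y
    have h := H.phibar_metric X (H.phibar Y)
    rw [ηφ Y, mul_zero, sub_zero, H.phibar_sq Y] at h
    simp only [map_add, map_neg, map_smul, smul_eq_mul, ηφ X, mul_zero, add_zero] at h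
    linear_combination -h
  have hVE : H.phibar (H.xi : E) = -(H.V : E) := by
    rw [H.V_spec, neg_neg]
  -- B X ζ = -ḡ(X, V)
  have Bζ : ∀ X : H.TM, H.B X H.zeta = -H.gbar (X : E) (H.V : E) := by
    intro X
    have hsk := skew (H.xi : E) (X : E)
    rw [hVE] at hsk
    have hsk2 : H.gbar (H.xi : E) (H.phibar (X : E)) = H.gbar (X : E) (H.V : E) := by
      simp only [map_neg, LinearMap.neg_apply] at hsk
      rw [gsymm (X : E) (H.V : E)]
      linear_combination hsk
    rw [BNg X H.zeta, H.sasaki_zeta X, map_neg, hsk2]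
  -- B(ξ, ·) = 0
  have Bξ : ∀ Z : H.TM, H.B H.xi Z = 0 := by
    intro Z
    rw [Bsymm, BAg]
    exact hTξ _
  have BXξ : ∀ X : H.TM, H.B X H.xi = 0 := fun X => (Bsymm X H.xi).trans (Bξ X)
  -- ∇_X ξ = -A*X - τ(X) ξ
  have nablaξ : ∀ X : H.TM, (H.nabla X H.xi : E)
      = -(H.Astar X : E) - H.tau X • (H.xi : E) := by
    intro X
    have h := H.gauss X H.xi
    rw [BXξ X, zero_smul, add_zero] at h
    rw [← h]
    exact H.weingarten_screen X
  -- recurrence with Y = ξ : ḡ(A*Z, A*X) = 0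
  have recξ : ∀ X Z : H.TM, H.gbar (H.Astar Z : E) (H.Astar X : E) = 0 := by
    intro X Z
    have h := Brec X H.xi Z
    rw [Bξ Z, Bξ (H.nabla X Z)] at h
    simp only [map_zero, zero_mul, mul_zero, zero_add, sub_zero, zero_sub, neg_eq_zero] at h
    rw [Bsymm, BAg, nablaξ X] at h
    simp only [map_sub, map_neg, map_smul, smul_eq_mul, hTξ, mul_zero, sub_zero,
      neg_eq_zero] at h
    exact h
  have hAUAU : H.gbar (H.Astar H.U : E) (H.Astar H.U : E) = 0 := recξ H.U H.U
  have hBAUζ : H.B (H.Astar H.U) H.zeta = 0 := by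
    rw [Bsymm, BAg]
    exact recξ H.U H.zeta
  have hAUV : H.gbar (H.Astar H.U : E) (H.V : E) = 0 := by
    have h := Bζ (H.Astar H.U)
    rw [hBAUζ] at h
    linear_combination h
  -- ḡ(U,V) = 1
  have hUV : H.gbar (H.U : E) (H.V : E) = 1 := by
    rw [H.U_spec, H.V_spec]
    simp only [map_neg, LinearMap.neg_apply, neg_neg]
    rw [H.phibar_metric, hξT H.zeta, mul_zero, sub_zero, gsymm, H.gbar_xi_Nt]
  -- φ̄ U = N
  have hφU : H.phibar (H.U : E) = H.Nt := by
    have hNζ : H.gbar H.Nt (H.zeta : E) = 0 := H.gbar_Nt_S _ H.zeta_mem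
    rw [H.U_spec, map_neg, H.phibar_sq, hNζ, zero_smul, add_zero, neg_neg]
  -- φ U = 0
  have hφUE0 : (H.phi H.U : E) = 0 := by
    have h := H.phi_spec H.U
    rw [hφU, hUV, one_smul] at h
    exact right_eq_add.mp h
  -- φ̄ V = ξ
  have hφV : H.phibar (H.V : E) = (H.xi : E) := by
    rw [H.V_spec, map_neg, H.phibar_sq, hξT H.zeta, zero_smul, add_zero, neg_neg]
  -- the key vector field P = φ(A* U)
  set W : H.TM := H.Astar H.U with hW
  set Pv : H.TM := H.phi W with hPv
  have hPE : (Pv : E) = H.phibar (W : E) := by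
    have h := H.phi_spec W
    rw [hAUV, zero_smul, add_zero] at h
    exact h.symm
  have hPV : H.gbar (Pv : E) (H.V : E) = 0 := by
    rw [hPE, skew, hφV]
    simp [hTξ]
  have hWζ : H.gbar (W : E) (H.zeta : E) = -1 := by
    have h1 := BAg H.U H.zeta
    have h2 := Bζ H.U
    rw [hUV] at h2
    rw [← hW] at h1
    rw [← h1, h2]
  have hPP : H.gbar (Pv : E) (Pv : E) = -1 := by
    rw [hPE, H.phibar_metric, hAUAU, hWζ]
    ring
  have hBUζ : H.B H.U H.zeta = -1 := by
    rw [Bζ, hUV]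
  -- ∇_U ζ = 0
  have hnUζ : (H.nabla H.U H.zeta : E) = 0 := by
    have h := H.gauss H.U H.zeta
    rw [H.sasaki_zeta H.U, hφU, hBUζ, neg_smul, one_smul] at h
    have h2 : (H.nabla H.U H.zeta : E) + -H.Nt = 0 + -H.Nt := by
      rw [zero_add]
      exact h.symm
    exact add_right_cancel h2
  -- ∇̄_U V = P - τ(U) V
  have hnbUV : H.nablaBar H.U (H.V : E) = (Pv : E) - H.tau H.U • (H.V : E) := by
    have hs := H.sasaki H.U (H.xi : E)
    rw [hTξ H.U, hξT H.zeta, zero_smul, zero_smul, sub_zero] at hs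
    have h1 : H.nablaBar H.U (H.phibar (H.xi : E)) = H.phibar (H.nablaBar H.U (H.xi : E)) :=
      sub_eq_zero.mp hs
    rw [hVE, nbneg, H.weingarten_screen H.U] at h1
    have h2 : H.phibar (-(H.Astar H.U : E) - H.tau H.U • (H.xi : E))
        = -(Pv : E) + H.tau H.U • (H.V : E) := by
      rw [map_sub, map_neg, map_smul, hVE, ← hW, ← hPE, smul_neg, sub_neg_eq_add]
    rw [h2] at h1
    have h3 : H.nablaBar H.U (H.V : E) = -(-(Pv : E) + H.tau H.U • (H.V : E)) := by
      rw [← h1, neg_neg]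
    rw [h3]
    abel
  have hBPζ : H.B Pv H.zeta = 0 := by
    rw [Bζ, hPV, neg_zero]
  have hgNV : H.gbar H.Nt (H.V : E) = 0 := H.gbar_Nt_S _ H.V_mem
  have hgnUPV : H.gbar (H.nablaBar H.U (Pv : E)) (H.V : E) = 1 := by
    have hm := H.nablaBar_metric H.U (Pv : E) (H.V : E)
    rw [hPV, map_zero, hnbUV] at hm
    simp only [map_sub, map_smul, smul_eq_mul, hPP, hPV, mul_zero, sub_zero] at hm
    linear_combination -hm
  have hBnUPζ : H.B (H.nabla H.U Pv) H.zeta = -1 := by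
    rw [Bζ]
    have h := H.gauss H.U Pv
    have h2 : H.gbar ((H.nabla H.U Pv : E)) (H.V : E) = 1 := by
      have h3 := congrArg (fun w => H.gbar w (H.V : E)) h
      simp only [map_add, map_smul, LinearMap.add_apply, LinearMap.smul_apply,
        smul_eq_mul, hgNV, mul_zero, add_zero, hgnUPV] at h3
      linear_combination -h3
    rw [h2]
  have hBPnUζ : H.B Pv (H.nabla H.U H.zeta) = 0 := by
    rw [BAg, hnUζ, map_zero]
  have final := Brec H.U Pv H.zeta
  rw [hBPζ, hBnUPζ, hBPnUζ] at final
  simp only [map_zero, zero_mul, mul_zero, zero_add, sub_zero, sub_neg_eq_add] at final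
  exact one_ne_zero (by linear_combination final)
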